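/- Let n, p be positive integers. Let 𝐗̂ be a symmetric invertible 2n×2n real matrix with block form 𝐗̂ = [[X̂, Ûᵀ], [Û, X̂₂₂]] (n×n blocks) and inverse 𝐗̂⁻¹ = [[Ŷ, Ŝ], [Ŝᵀ, Ŷ₂₂]], and let T̂ = [[I, Ŷ], [0, Ŝᵀ]]. Let A be n×n, C be p×n, Â be n×n, B̂ be n×p real matrices, and set 𝐀̂ = [[A, 0], [B̂·C, Â]] (2n×2n) and 𝐂̂ = [I, −I] (n×2n). Define F̂ = Ŝ·B̂ and Q̂ = Ŷ·A·X̂ + F̂·C·X̂ + Ŝ·Â·Û. Then T̂ᵀ 𝐀̂ 𝐗̂ T̂ = [[A·X̂, A], [Q̂, Ŷ·A + F̂·C]] and 𝐂̂ 𝐗̂ T̂ = [X̂ − Û, I]. -/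

import Mathlib

open Matrix

/-- The change-of-variables computation in the proof of Theorem 1 for the
estimator part: the substitutions `F̂ = Ŝ·B̂`, `Q̂ = Ŷ·A·X̂ + F̂·C·X̂ + Ŝ·Â·Û`
produce the blocks of the LMIs (12)–(13). -/
theorem change_of_variables_estimator
    (n p : ℕ) (hn : 0 < n) (hp : 0 < p)
    (Xhat Uhat Xhat22 Yhat Shat Yhat22 : Matrix (Fin n) (Fin n) ℝ)
    (hsymm : (fromBlocks Xhat Uhatᵀ Uhat Xhat22).IsHermitian)
    (hmul₁ : fromBlocks Xhat Uhatᵀ Uhat Xhat22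
        * fromBlocks Yhat Shat Shatᵀ Yhat22 = 1)
    (hmul₂ : fromBlocks Yhat Shat Shatᵀ Yhat22
        * fromBlocks Xhat Uhatᵀ Uhat Xhat22 = 1)
    (A : Matrix (Fin n) (Fin n) ℝ) (C : Matrix (Fin p) (Fin n) ℝ)
    (Ahat : Matrix (Fin n) (Fin n) ℝ) (Bhat : Matrix (Fin n) (Fin p) ℝ)
    (Fhat : Matrix (Fin n) (Fin p) ℝ) (Qhat : Matrix (Fin n) (Fin n) ℝ)
    (hFhat : Fhat = Shat * Bhat)
    (hQhat : Qhat = Yhat * A * Xhat + Fhat * C * Xhat + Shat * Ahat * Uhat) :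
    (fromBlocks 1 Yhat 0 Shatᵀ)ᵀ * (fromBlocks A 0 (Bhat * C) Ahat)
        * (fromBlocks Xhat Uhatᵀ Uhat Xhat22) * fromBlocks 1 Yhat 0 Shatᵀ
      = fromBlocks (A * Xhat) A Qhat (Yhat * A + Fhat * C)
    ∧
    (fromCols 1 (-1) : Matrix (Fin n) (Fin n ⊕ Fin n) ℝ)
        * (fromBlocks Xhat Uhatᵀ Uhat Xhat22) * fromBlocks 1 Yhat 0 Shatᵀ
      = fromCols (Xhat - Uhat) 1 := by
  -- The inverse of a symmetric matrix is symmetric, hence `Yhatᵀ = Yhat`.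
  have hM : (fromBlocks Xhat Uhatᵀ Uhat Xhat22)ᵀ = fromBlocks Xhat Uhatᵀ Uhat Xhat22 := by
    simpa using hsymm.eq
  have hNsymm : (fromBlocks Yhat Shat Shatᵀ Yhat22)ᵀ = fromBlocks Yhat Shat Shatᵀ Yhat22 := by
    calc (fromBlocks Yhat Shat Shatᵀ Yhat22)ᵀ
        = (fromBlocks Yhat Shat Shatᵀ Yhat22)ᵀ
            * (fromBlocks Xhat Uhatᵀ Uhat Xhat22 * fromBlocks Yhat Shat Shatᵀ Yhat22) := by
          rw [hmul₁, mul_one]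
      _ = ((fromBlocks Yhat Shat Shatᵀ Yhat22)ᵀ * (fromBlocks Xhat Uhatᵀ Uhat Xhat22)ᵀ)
            * fromBlocks Yhat Shat Shatᵀ Yhat22 := by rw [hM, mul_assoc]
      _ = (fromBlocks Xhat Uhatᵀ Uhat Xhat22 * fromBlocks Yhat Shat Shatᵀ Yhat22)ᵀ
            * fromBlocks Yhat Shat Shatᵀ Yhat22 := by rw [transpose_mul]
      _ = fromBlocks Yhat Shat Shatᵀ Yhat22 := by rw [hmul₁, transpose_one, one_mul]
  have hY : Yhatᵀ = Yhat := by
    have := congrArg Matrix.toBlocks₁₁ hNsymm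
    simpa [fromBlocks_transpose] using this
  -- Block identities from `hmul₁`.
  rw [show (1 : Matrix (Fin n ⊕ Fin n) (Fin n ⊕ Fin n) ℝ) = fromBlocks 1 0 0 1 from
        (fromBlocks_one).symm, fromBlocks_multiply] at hmul₁
  obtain ⟨e1, -, e2, -⟩ := fromBlocks_inj.mp hmul₁
  constructor
  · rw [fromBlocks_transpose, transpose_one, transpose_zero, transpose_transpose, hY,
      fromBlocks_multiply, fromBlocks_multiply, fromBlocks_multiply]
    refine fromBlocks_inj.mpr ⟨?_, ?_, ?_, ?_⟩
    · noncomm_ring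
    · calc ((1 * A + 0 * (Bhat * C)) * Xhat + (1 * 0 + 0 * Ahat) * Uhat) * Yhat +
            ((1 * A + 0 * (Bhat * C)) * Uhatᵀ + (1 * 0 + 0 * Ahat) * Xhat22) * Shatᵀ
          = A * (Xhat * Yhat + Uhatᵀ * Shatᵀ) := by noncomm_ring
        _ = A := by rw [e1, mul_one]
    · rw [hQhat, hFhat]
      simp only [Matrix.mul_assoc, Matrix.zero_mul, Matrix.mul_zero, Matrix.add_mul,
        Matrix.mul_add, Matrix.one_mul, Matrix.mul_one, zero_add, add_zero]
    · calc ((Yhat * A + Shat * (Bhat * C)) * Xhat + (Yhat * 0 + Shat * Ahat) * Uhat) * Yhat +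
            ((Yhat * A + Shat * (Bhat * C)) * Uhatᵀ + (Yhat * 0 + Shat * Ahat) * Xhat22) * Shatᵀ
          = (Yhat * A + Shat * (Bhat * C)) * (Xhat * Yhat + Uhatᵀ * Shatᵀ)
              + Shat * Ahat * (Uhat * Yhat + Xhat22 * Shatᵀ) := by noncomm_ring
        _ = Yhat * A + Fhat * C := by
              rw [e1, e2, hFhat, Matrix.mul_zero, Matrix.mul_one, add_zero, Matrix.mul_assoc]
  · have c1 : (1 : Matrix (Fin n) (Fin n) ℝ) * Xhat + (-1) * Uhat = Xhat - Uhat := by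
      noncomm_ring
    have c2 : (Xhat - Uhat) * Yhat + ((1 : Matrix (Fin n) (Fin n) ℝ) * Uhatᵀ + (-1) * Xhat22) * Shatᵀ
        = 1 := by
      calc (Xhat - Uhat) * Yhat + ((1 : Matrix (Fin n) (Fin n) ℝ) * Uhatᵀ + (-1) * Xhat22) * Shatᵀ
          = (Xhat * Yhat + Uhatᵀ * Shatᵀ) - (Uhat * Yhat + Xhat22 * Shatᵀ) := by noncomm_ring
        _ = 1 := by rw [e1, e2, sub_zero]
    rw [fromCols_mul_fromBlocks, c1, fromCols_mul_fromBlocks, c2,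
      Matrix.mul_one, Matrix.mul_zero, add_zero]
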